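/- arXiv:1209.4328 — 2 statements merged into one kernel-verified Lean document; each statement's English description precedes it below -/
import Mathlib

section
/- Let d, m, n be positive integers. Suppose {(λ_α, x_α)}_{α∈A} is a cubature formula of degree n on B^d with respect to the weight w_{m/2}(x) = (1-‖x‖²)^{(m-1)/2}, and {(ν_β, t_β)}_{β∈B} is a cubature formula of degree n on S^m with respect to surface measure. Then the formula with nodes (x_α, √(1-‖x_α‖²)·t_β) ∈ S^{d+m} and weights λ_α·ν_β is a cubature formula of degree n on S^{d+m}: for every polynomial f of degree ≤ n in d+m+1 variables, ∑_{α,β} λ_α ν_β f(x_α, √(1-‖x_α‖²) t_β) = ∫_{S^{d+m}} f dω. -/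
open MeasureTheory Metric

noncomputable def sphereMeasure (k : ℕ) :
    Measure (Metric.sphere (0 : EuclideanSpace ℝ (Fin (k + 1))) 1) :=
  (volume : Measure (EuclideanSpace ℝ (Fin (k + 1)))).toSphere

noncomputable def join {d m : ℕ} (x : EuclideanSpace ℝ (Fin d))
    (y : EuclideanSpace ℝ (Fin (m + 1))) : EuclideanSpace ℝ (Fin (d + (m + 1))) :=
  (WithLp.equiv 2 (Fin (d + (m + 1)) → ℝ)).symm (Fin.append x y)

open MeasureTheory Metric Set Real MeasureTheory.Measure

section Polar
variable {D : ℕ}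

lemma euclid_nontrivial (hD : 0 < D) : Nontrivial (EuclideanSpace ℝ (Fin D)) := by
  haveI : Nonempty (Fin D) := ⟨⟨0, hD⟩⟩
  infer_instance

lemma integral_volumeIoiPow (n : ℕ) (h : ℝ → ℝ) (hmeas : Measurable h) :
    ∫ r : Ioi (0:ℝ), h r ∂(Measure.volumeIoiPow n) = ∫ r in Ioi (0:ℝ), r ^ n * h r := by
  clear hmeas
  simp only [Measure.volumeIoiPow, ENNReal.ofReal]
  rw [integral_withDensity_eq_integral_smul
      ((measurable_subtype_coe.pow_const _).real_toNNReal),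
    integral_subtype_comap measurableSet_Ioi fun a : ℝ ↦ Real.toNNReal (a ^ n) • h a,
    setIntegral_congr_fun measurableSet_Ioi fun x hx ↦ ?_]
  rw [NNReal.smul_def, Real.coe_toNNReal _ (pow_nonneg hx.out.le _), smul_eq_mul]

lemma integral_polar (hD : 0 < D) (F : EuclideanSpace ℝ (Fin D) → ℝ)
    (hF : Integrable F) (hFc : Measurable F) :
    ∫ y, F y = ∫ θ : sphere (0 : EuclideanSpace ℝ (Fin D)) 1,
      (∫ r in Ioi (0:ℝ), r ^ (D - 1) * F (r • (θ : EuclideanSpace ℝ (Fin D))))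
      ∂((volume : Measure (EuclideanSpace ℝ (Fin D))).toSphere) := by
  haveI := euclid_nontrivial hD
  have hfin : Module.finrank ℝ (EuclideanSpace ℝ (Fin D)) = D := finrank_euclideanSpace_fin
  let E := EuclideanSpace ℝ (Fin D)
  let μ : Measure E := volume
  let G : sphere (0:E) 1 × Ioi (0:ℝ) → ℝ := fun p => F ((p.2 : ℝ) • (p.1 : E))
  have hGcomp : ∀ z : ({0}ᶜ : Set E), G (homeomorphUnitSphereProd E z) = F z := by
    intro z
    show F ((‖z.1‖ / 1) • (1:ℝ) • ‖z.1‖⁻¹ • z.1) = F z.1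
    rw [div_one, one_smul, smul_inv_smul₀ (norm_ne_zero_iff.2 z.2)]
  have hemb : MeasurableEmbedding (Subtype.val : ({0}ᶜ : Set E) → E) :=
    MeasurableEmbedding.subtype_coe (measurableSet_singleton (0:E)).compl
  have hsub : Integrable (fun z : ({0}ᶜ : Set E) => F z)
      (Measure.comap Subtype.val μ) := by
    have h2 := hemb.integrable_map_iff
      (μ := Measure.comap (Subtype.val : ({0}ᶜ : Set E) → E) μ) (g := F)
    rw [hemb.map_comap, Subtype.range_coe] at h2
    exact h2.mp hF.restrict
  have hint : Integrable G (μ.toSphere.prod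
      (Measure.volumeIoiPow (Module.finrank ℝ E - 1))) := by
    rw [← (μ.measurePreserving_homeomorphUnitSphereProd).integrable_comp_emb
      (Homeomorph.measurableEmbedding _)]
    have : (G ∘ (homeomorphUnitSphereProd E)) = fun z : ({0}ᶜ : Set E) => F z := by
      funext z; exact hGcomp z
    rw [this]; exact hsub
  calc ∫ y, F y ∂μ = ∫ z : ({0}ᶜ : Set E), F z ∂(Measure.comap Subtype.val μ) := by
        rw [integral_subtype_comap (measurableSet_singleton _).compl fun z => F z,
          restrict_compl_singleton]
    _ = ∫ p, G p ∂(μ.toSphere.prod (Measure.volumeIoiPow (Module.finrank ℝ E - 1))) := by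
        rw [← (μ.measurePreserving_homeomorphUnitSphereProd).integral_comp
          (Homeomorph.measurableEmbedding _) G]
        exact (integral_congr_ae (Filter.Eventually.of_forall fun z => (hGcomp z))).symm
    _ = ∫ θ : sphere (0:E) 1, ∫ r : Ioi (0:ℝ), G (θ, r)
          ∂(Measure.volumeIoiPow (Module.finrank ℝ E - 1)) ∂μ.toSphere :=
        integral_prod G hint
    _ = _ := by
        refine integral_congr_ae (Filter.Eventually.of_forall fun θ => ?_)
        rw [hfin]
        exact integral_volumeIoiPow (D-1) (fun r => F (r • (θ:E)))
          (hFc.comp (measurable_id.smul_const _))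
end Polar


noncomputable def g1 (k : ℕ) : ℝ := ∫ s : ℝ, s ^ k * Real.exp (-s ^ 2)

lemma negone_lt_natCast (k : ℕ) : (-1:ℝ) < (k:ℝ) :=
  lt_of_lt_of_le (by norm_num) (Nat.cast_nonneg k)

lemma integrable_g1 (k : ℕ) : Integrable (fun s : ℝ => s ^ k * Real.exp (-s ^ 2)) := by
  have h := integrable_rpow_mul_exp_neg_mul_sq (b := 1) one_pos
    (s := (k : ℝ)) (negone_lt_natCast k)
  simpa [Real.rpow_natCast] using h

lemma g1_odd {k : ℕ} (hk : Odd k) : g1 k = 0 := by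
  have h := (Measure.measurePreserving_neg (volume : Measure ℝ)).integral_comp
    (Homeomorph.neg ℝ).measurableEmbedding (fun s : ℝ => s ^ k * Real.exp (-s ^ 2))
  have h2 : ∫ s : ℝ, (-s) ^ k * Real.exp (-(-s) ^ 2) = g1 k := h
  rw [show (fun s : ℝ => (-s) ^ k * Real.exp (-(-s)^2)) = fun s : ℝ => -(s ^ k * Real.exp (-s^2))
    by funext s; rw [hk.neg_pow, neg_sq]; ring, integral_neg] at h2
  have : ∫ s : ℝ, s ^ k * Real.exp (-s ^ 2) = g1 k := rfl
  rw [this] at h2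
  linarith

lemma gamma_radial (K : ℕ) :
    ∫ r in Ioi (0:ℝ), r ^ K * Real.exp (-r ^ 2) = Real.Gamma (((K:ℝ) + 1) / 2) / 2 := by
  have h := integral_rpow_mul_exp_neg_rpow (p := 2) (q := (K : ℝ)) two_pos (negone_lt_natCast K)
  calc ∫ r in Ioi (0:ℝ), r ^ K * Real.exp (-r ^ 2)
      = ∫ r in Ioi (0:ℝ), r ^ (K:ℝ) * Real.exp (-r ^ (2:ℝ)) := by
        refine setIntegral_congr_fun measurableSet_Ioi fun r hr => ?_
        rw [Real.rpow_natCast, Real.rpow_two]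
    _ = 1 / 2 * Real.Gamma (((K:ℝ) + 1) / 2) := h
    _ = _ := by ring


lemma real_beta {s t : ℝ} (hs : 0 < s) (ht : 0 < t) :
    ∫ y in Ioc (0:ℝ) 1, y ^ (s-1) * (1-y) ^ (t-1)
      = Real.Gamma s * Real.Gamma t / Real.Gamma (s+t) := by
  have hβ := Complex.Gamma_mul_Gamma_eq_betaIntegral (s := (s:ℂ)) (t := (t:ℂ))
    (by simpa using hs) (by simpa using ht)
  have hcast : ∫ y in Ioc (0:ℝ) 1, ((y ^ (s-1) * (1-y) ^ (t-1) : ℝ) : ℂ)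
      = ((∫ y in Ioc (0:ℝ) 1, y ^ (s-1) * (1-y) ^ (t-1) : ℝ) : ℂ) := integral_ofReal
  have hbi : Complex.betaIntegral (s:ℂ) (t:ℂ)
      = ((∫ y in Ioc (0:ℝ) 1, y ^ (s-1) * (1-y) ^ (t-1) : ℝ) : ℂ) := by
    rw [Complex.betaIntegral, intervalIntegral.integral_of_le zero_le_one, ← hcast]
    refine setIntegral_congr_fun measurableSet_Ioc fun y hy => ?_
    obtain ⟨hy0, hy1⟩ := hy
    push_cast
    rw [Complex.ofReal_cpow hy0.le, Complex.ofReal_cpow (by linarith : (0:ℝ) ≤ 1 - y)]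
    push_cast
    ring
  rw [hbi, Complex.Gamma_ofReal, Complex.Gamma_ofReal, ← Complex.ofReal_add,
    Complex.Gamma_ofReal, ← Complex.ofReal_mul, ← Complex.ofReal_mul] at hβ
  have h3 := Complex.ofReal_inj.mp hβ
  have hΓ : Real.Gamma (s+t) ≠ 0 := (Real.Gamma_pos_of_pos (by linarith)).ne'
  field_simp
  linarith [h3]

lemma radial_beta (K : ℕ) {β : ℝ} (hβ : 0 ≤ β) :
    ∫ r in Ioc (0:ℝ) 1, r ^ K * (1 - r^2) ^ β
      = Real.Gamma (((K:ℝ)+1)/2) * Real.Gamma (β+1)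
        / (2 * Real.Gamma (((K:ℝ)+1)/2 + (β+1))) := by
  set gfun : ℝ → ℝ := (Ioc (0:ℝ) 1).indicator (fun y => y ^ (((K:ℝ)-1)/2) * (1-y) ^ β)
    with hgfun
  have key := integral_comp_rpow_Ioi gfun (p := 2) two_ne_zero
  have hL : ∫ x in Ioi (0:ℝ), (|2| * x ^ ((2:ℝ) - 1)) • gfun (x ^ (2:ℝ))
      = 2 * ∫ r in Ioc (0:ℝ) 1, r ^ K * (1 - r^2) ^ β := by
    have : ∀ x ∈ Ioi (0:ℝ), (|2| * x ^ ((2:ℝ) - 1)) • gfun (x ^ (2:ℝ))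
        = (Ioc (0:ℝ) 1).indicator (fun r => 2 * (r ^ K * (1 - r^2) ^ β)) x := by
      intro x hx
      have hx0 : (0:ℝ) < x := hx
      have hx2 : x ^ (2:ℝ) = x ^ 2 := by
        rw [show (2:ℝ) = ((2:ℕ):ℝ) by norm_num, Real.rpow_natCast]
      have hmem : x ^ (2:ℝ) ∈ Ioc (0:ℝ) 1 ↔ x ∈ Ioc (0:ℝ) 1 := by
        rw [hx2]
        constructor
        · rintro ⟨h1, h2⟩; exact ⟨hx0, by nlinarith⟩
        · rintro ⟨h1, h2⟩; exact ⟨by positivity, by nlinarith⟩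
      by_cases hmx : x ∈ Ioc (0:ℝ) 1
      · rw [hgfun, indicator_of_mem (hmem.mpr hmx), indicator_of_mem hmx]
        have h4 : (x ^ (2:ℝ)) ^ (((K:ℝ)-1)/2) = x ^ ((K:ℝ)-1) := by
          rw [← Real.rpow_mul hx0.le]
          congr 1; ring
        have h5 : x ^ ((K:ℝ)-1) * x = x ^ K := by
          rw [← Real.rpow_natCast x K, Real.rpow_sub hx0, Real.rpow_one]
          field_simp
        rw [h4, hx2, show ((2:ℝ)-1) = 1 by norm_num, Real.rpow_one,
          show |(2:ℝ)| = 2 by norm_num, smul_eq_mul]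
        rw [← h5]; ring
      · rw [hgfun, indicator_of_notMem ((not_iff_not.mpr hmem).mpr hmx),
          indicator_of_notMem hmx, smul_zero]
    rw [setIntegral_congr_fun measurableSet_Ioi this,
      setIntegral_indicator measurableSet_Ioc,
      show Ioi (0:ℝ) ∩ Ioc (0:ℝ) 1 = Ioc (0:ℝ) 1 by
        rw [inter_eq_right]; exact Ioc_subset_Ioi_self,
      integral_const_mul]
  have hR : ∫ y in Ioi (0:ℝ), gfun y
      = Real.Gamma (((K:ℝ)+1)/2) * Real.Gamma (β+1) / Real.Gamma (((K:ℝ)+1)/2 + (β+1)) := by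
    rw [hgfun, setIntegral_indicator measurableSet_Ioc,
      show Ioi (0:ℝ) ∩ Ioc (0:ℝ) 1 = Ioc (0:ℝ) 1 by
        rw [inter_eq_right]; exact Ioc_subset_Ioi_self]
    have := real_beta (s := ((K:ℝ)+1)/2) (t := β+1) (by positivity) (by linarith)
    rw [show ((K:ℝ)+1)/2 - 1 = ((K:ℝ)-1)/2 by ring, show β + 1 - 1 = β by ring] at this
    exact this
  rw [hL, hR] at key
  have hΓ : Real.Gamma (((K:ℝ)+1)/2 + (β+1)) ≠ 0 :=
    (Real.Gamma_pos_of_pos (by positivity)).ne'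
  field_simp at key ⊢
  linarith



variable {D : ℕ}

lemma euclid_norm_sq (y : EuclideanSpace ℝ (Fin D)) : ‖y‖ ^ 2 = ∑ i, (y i) ^ 2 := by
  rw [EuclideanSpace.norm_eq, Real.sq_sqrt (by positivity)]
  simp [Real.norm_eq_abs, sq_abs]

lemma mono_gauss_eq (c : Fin D → ℕ) :
    (fun y : EuclideanSpace ℝ (Fin D) => (∏ i, (y i) ^ (c i)) * Real.exp (-‖y‖ ^ 2))
      = fun y => ∏ i, ((y i) ^ (c i) * Real.exp (-(y i) ^ 2)) := by
  funext y
  rw [Finset.prod_mul_distrib, euclid_norm_sq, ← Finset.sum_neg_distrib, Real.exp_sum]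

lemma measurable_mono_gauss (c : Fin D → ℕ) :
    Measurable (fun y : EuclideanSpace ℝ (Fin D) =>
      (∏ i, (y i) ^ (c i)) * Real.exp (-‖y‖ ^ 2)) := by
  have : Continuous (fun y : EuclideanSpace ℝ (Fin D) =>
      (∏ i, (y i) ^ (c i)) * Real.exp (-‖y‖ ^ 2)) := by fun_prop
  exact this.measurable

lemma integrable_mono_gauss (c : Fin D → ℕ) :
    Integrable (fun y : EuclideanSpace ℝ (Fin D) =>
      (∏ i, (y i) ^ (c i)) * Real.exp (-‖y‖ ^ 2)) := by
  rw [mono_gauss_eq]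
  have hψ := EuclideanSpace.volume_preserving_symm_measurableEquiv_toLp (Fin D)
  have hG : Integrable (fun x : Fin D → ℝ =>
      ∏ i, ((x i) ^ (c i) * Real.exp (-(x i) ^ 2))) volume :=
    Integrable.fintype_prod (f := fun i (s : ℝ) => s ^ (c i) * Real.exp (-s ^ 2))
      fun i => integrable_g1 (c i)
  exact (hψ.integrable_comp_emb (MeasurableEquiv.toLp 2 (Fin D → ℝ)).symm.measurableEmbedding).mpr hG

lemma integral_mono_gauss (c : Fin D → ℕ) :
    ∫ y : EuclideanSpace ℝ (Fin D), (∏ i, (y i) ^ (c i)) * Real.exp (-‖y‖ ^ 2)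
      = ∏ i, g1 (c i) := by
  rw [mono_gauss_eq]
  have hψ := EuclideanSpace.volume_preserving_symm_measurableEquiv_toLp (Fin D)
  have := hψ.integral_comp (MeasurableEquiv.toLp 2 (Fin D → ℝ)).symm.measurableEmbedding
    (fun x : Fin D → ℝ => ∏ i, ((x i) ^ (c i) * Real.exp (-(x i) ^ 2)))
  have h2 : (∫ y : EuclideanSpace ℝ (Fin D), ∏ i, ((y i) ^ (c i) * Real.exp (-(y i) ^ 2)))
      = ∫ x : Fin D → ℝ, ∏ i, ((x i) ^ (c i) * Real.exp (-(x i) ^ 2)) := this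
  rw [h2, MeasureTheory.integral_fintype_prod_volume_eq_prod
    (f := fun i (s : ℝ) => s ^ (c i) * Real.exp (-s ^ 2))]
  rfl

/-- integral of a monomial over the sphere, in terms of 1-D Gaussian moments. -/
lemma sphere_monomial (hD : 0 < D) (c : Fin D → ℕ) :
    ∫ θ : sphere (0 : EuclideanSpace ℝ (Fin D)) 1,
        ∏ i, ((θ : EuclideanSpace ℝ (Fin D)) i) ^ (c i)
      ∂((volume : Measure (EuclideanSpace ℝ (Fin D))).toSphere)
    = 2 * (∏ i, g1 (c i)) / Real.Gamma ((D + ∑ i, c i) / 2) := by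
  haveI := euclid_nontrivial hD
  have key := integral_polar hD _ (integrable_mono_gauss c) (measurable_mono_gauss c)
  rw [integral_mono_gauss c] at key
  have hinner : ∀ θ : sphere (0 : EuclideanSpace ℝ (Fin D)) 1,
      (∫ r in Ioi (0:ℝ), r ^ (D - 1) *
        ((∏ i, ((r • (θ : EuclideanSpace ℝ (Fin D))) i) ^ (c i)) *
          Real.exp (-‖r • (θ : EuclideanSpace ℝ (Fin D))‖ ^ 2)))
      = (∏ i, ((θ : EuclideanSpace ℝ (Fin D)) i) ^ (c i))
          * (Real.Gamma (((D:ℝ) + ∑ i, c i) / 2) / 2) := by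
    intro θ
    have hθ : ‖(θ : EuclideanSpace ℝ (Fin D))‖ = 1 := by
      have := θ.2
      simpa [mem_sphere_iff_norm] using this
    have : ∀ r ∈ Ioi (0:ℝ), r ^ (D - 1) *
        ((∏ i, ((r • (θ : EuclideanSpace ℝ (Fin D))) i) ^ (c i)) *
          Real.exp (-‖r • (θ : EuclideanSpace ℝ (Fin D))‖ ^ 2))
        = (∏ i, ((θ : EuclideanSpace ℝ (Fin D)) i) ^ (c i))
          * (r ^ ((D - 1) + ∑ i, c i) * Real.exp (-r ^ 2)) := by
      intro r hr
      have hr0 : (0:ℝ) < r := hr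
      have hsm : ∀ i, (r • (θ : EuclideanSpace ℝ (Fin D))) i
          = r * (θ : EuclideanSpace ℝ (Fin D)) i := fun i => rfl
      have hnorm : ‖r • (θ : EuclideanSpace ℝ (Fin D))‖ = r := by
        rw [norm_smul, hθ, Real.norm_eq_abs, abs_of_pos hr0, mul_one]
      simp only [hsm, hnorm, mul_pow]
      rw [Finset.prod_mul_distrib, Finset.prod_pow_eq_pow_sum]
      rw [pow_add]
      ring
    rw [setIntegral_congr_fun measurableSet_Ioi this, integral_const_mul, gamma_radial]
    have : (((D - 1 + ∑ i, c i : ℕ) :ℝ) + 1) / 2 = ((D:ℝ) + ∑ i, c i) / 2 := by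
      have h1 : ((D - 1 + ∑ i, c i : ℕ) :ℝ) = (D:ℝ) - 1 + ∑ i, c i := by
        push_cast [Nat.cast_sub hD]
        ring
      rw [h1]; push_cast; ring
    rw [this]
  rw [integral_congr_ae (Filter.Eventually.of_forall hinner), integral_mul_const] at key
  have hΓ : Real.Gamma (((D:ℝ) + ∑ i, c i) / 2) ≠ 0 :=
    (Real.Gamma_pos_of_pos (by positivity)).ne'
  have : ((D:ℝ) + ∑ i, (c i :ℝ)) = ((D + ∑ i, c i : ℕ) : ℝ) := by push_cast; ring
  field_simp at key ⊢
  rw [← key]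



variable {d : ℕ}

lemma ball_monomial (hd : 0 < d) (a : Fin d → ℕ) {β : ℝ} (hβ : 0 ≤ β) :
    ∫ z in closedBall (0 : EuclideanSpace ℝ (Fin d)) 1,
        (∏ i, (z i) ^ (a i)) * (1 - ‖z‖ ^ 2) ^ β
    = (∏ i, g1 (a i)) * Real.Gamma (β+1)
        / Real.Gamma (((d:ℝ) + ∑ i, a i) / 2 + (β+1)) := by
  haveI := euclid_nontrivial hd
  set E := EuclideanSpace ℝ (Fin d)
  set f : E → ℝ := fun y => (∏ i, (y i) ^ (a i)) * (1 - ‖y‖ ^ 2) ^ β with hf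
  have hfm : Measurable f := by
    rw [hf]
    exact (by fun_prop : Measurable (fun y : EuclideanSpace ℝ (Fin d) =>
      (∏ i, (y i) ^ (a i)) * (1 - ‖y‖ ^ 2) ^ β))
  set F : E → ℝ := (closedBall (0:E) 1).indicator f with hF
  have hFm : Measurable F := hfm.indicator measurableSet_closedBall
  have hbd : ∀ z ∈ closedBall (0:E) 1, ‖f z‖ ≤ 1 := by
    intro z hz
    have hz1 : ‖z‖ ≤ 1 := by simpa [mem_closedBall, dist_zero_right] using hz
    have h1 : |∏ i, (z i) ^ (a i)| ≤ 1 := by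
      rw [Finset.abs_prod]
      refine Finset.prod_le_one (fun i _ => abs_nonneg _) (fun i _ => ?_)
      rw [abs_pow]
      refine pow_le_one₀ (abs_nonneg _) ?_
      have hsingle : (z i)^2 ≤ ∑ j, ‖z j‖^2 :=
        Finset.single_le_sum (f := fun j => ‖z j‖^2)
          (fun j _ => by positivity) (Finset.mem_univ i) |>.trans_eq' (by
            rw [Real.norm_eq_abs, sq_abs])
      calc |z i| = Real.sqrt ((z i)^2) := (Real.sqrt_sq_eq_abs _).symm
        _ ≤ Real.sqrt (∑ j, ‖z j‖^2) := Real.sqrt_le_sqrt hsingle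
        _ = ‖z‖ := (EuclideanSpace.norm_eq z).symm
        _ ≤ 1 := hz1
    have h2 : |(1 - ‖z‖ ^ 2) ^ β| ≤ 1 := by
      have hb0 : (0:ℝ) ≤ 1 - ‖z‖ ^ 2 := by nlinarith [norm_nonneg z]
      have hb1 : (1 - ‖z‖ ^ 2) ≤ 1 := by nlinarith [norm_nonneg z]
      rw [abs_of_nonneg (Real.rpow_nonneg hb0 β)]
      exact Real.rpow_le_one hb0 hb1 hβ
    calc ‖f z‖ = |∏ i, (z i) ^ (a i)| * |(1 - ‖z‖ ^ 2) ^ β| := by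
          rw [hf]; rw [Real.norm_eq_abs, abs_mul]
      _ ≤ 1 := by nlinarith [abs_nonneg (∏ i, (z i) ^ (a i))]
  have hFint : Integrable F := by
    rw [hF, integrable_indicator_iff measurableSet_closedBall]
    exact Measure.integrableOn_of_bounded (M := 1) (measure_closedBall_lt_top).ne
      hfm.aestronglyMeasurable
      (Filter.Eventually.mono (ae_restrict_mem measurableSet_closedBall) hbd)
  have key := integral_polar hd F hFint hFm
  rw [show ∫ y, F y = ∫ z in closedBall (0:E) 1, f z from integral_indicator measurableSet_closedBall] at key
  have hinner : ∀ θ : sphere (0:E) 1,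
      (∫ r in Ioi (0:ℝ), r ^ (d - 1) * F (r • (θ : E)))
      = (∏ i, ((θ : E) i) ^ (a i)) *
          (Real.Gamma (((d:ℝ) + ∑ i, a i)/2) * Real.Gamma (β+1)
            / (2 * Real.Gamma (((d:ℝ) + ∑ i, a i)/2 + (β+1)))) := by
    intro θ
    have hθ : ‖(θ : E)‖ = 1 := by
      have := θ.2; simpa [mem_sphere_iff_norm] using this
    have hpt : ∀ r ∈ Ioi (0:ℝ), r ^ (d - 1) * F (r • (θ : E))
        = (∏ i, ((θ : E) i) ^ (a i)) *
            (Ioc (0:ℝ) 1).indicator (fun r => r ^ ((d-1) + ∑ i, a i) * (1 - r^2) ^ β) r := by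
      intro r hr
      have hr0 : (0:ℝ) < r := hr
      have hnorm : ‖r • (θ : E)‖ = r := by
        rw [norm_smul, hθ, Real.norm_eq_abs, abs_of_pos hr0, mul_one]
      have hsm : ∀ i, (r • (θ : E)) i = r * (θ : E) i := fun i => rfl
      by_cases hmem : r ∈ Ioc (0:ℝ) 1
      · have hball : r • (θ : E) ∈ closedBall (0:E) 1 := by
          rw [mem_closedBall, dist_zero_right, hnorm]; exact hmem.2
        rw [hF, indicator_of_mem hball, indicator_of_mem hmem, hf]
        simp only [hsm, hnorm, mul_pow]
        rw [Finset.prod_mul_distrib, Finset.prod_pow_eq_pow_sum, pow_add]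
        ring
      · have hball : r • (θ : E) ∉ closedBall (0:E) 1 := by
          rw [mem_closedBall, dist_zero_right, hnorm]
          intro hc; exact hmem ⟨hr0, hc⟩
        rw [hF, indicator_of_notMem hball, indicator_of_notMem hmem]
        ring
    rw [setIntegral_congr_fun measurableSet_Ioi hpt, integral_const_mul,
      setIntegral_indicator measurableSet_Ioc,
      show Ioi (0:ℝ) ∩ Ioc (0:ℝ) 1 = Ioc (0:ℝ) 1 by
        rw [inter_eq_right]; exact Ioc_subset_Ioi_self,
      radial_beta _ hβ]
    congr 3
    · push_cast [Nat.cast_sub hd]; ring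
    · push_cast [Nat.cast_sub hd]; ring
  rw [integral_congr_ae (Filter.Eventually.of_forall hinner), integral_mul_const,
    sphere_monomial hd a] at key
  have hΓ1 : Real.Gamma (((d:ℝ) + ∑ i, a i)/2) ≠ 0 :=
    (Real.Gamma_pos_of_pos (by positivity)).ne'
  have hΓ2 : Real.Gamma (((d:ℝ) + ∑ i, a i)/2 + (β+1)) ≠ 0 :=
    (Real.Gamma_pos_of_pos (by positivity)).ne'
  rw [key]
  field_simp


lemma abs_mono_le_one {D : ℕ} (y : EuclideanSpace ℝ (Fin D)) (hy : ‖y‖ ≤ 1)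
    (c : Fin D → ℕ) : |∏ i, (y i) ^ (c i)| ≤ 1 := by
  rw [Finset.abs_prod]
  refine Finset.prod_le_one (fun i _ => abs_nonneg _) (fun i _ => ?_)
  rw [abs_pow]
  refine pow_le_one₀ (abs_nonneg _) ?_
  have hsingle : (y i)^2 ≤ ∑ j, ‖y j‖^2 :=
    Finset.single_le_sum (f := fun j => ‖y j‖^2)
      (fun j _ => by positivity) (Finset.mem_univ i) |>.trans_eq' (by
        rw [Real.norm_eq_abs, sq_abs])
  calc |y i| = Real.sqrt ((y i)^2) := (Real.sqrt_sq_eq_abs _).symm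
    _ ≤ Real.sqrt (∑ j, ‖y j‖^2) := Real.sqrt_le_sqrt hsingle
    _ = ‖y‖ := (EuclideanSpace.norm_eq y).symm
    _ ≤ 1 := hy

lemma integrable_mono_sphere {D : ℕ} (c : Fin D → ℕ) :
    Integrable (fun y : sphere (0 : EuclideanSpace ℝ (Fin D)) 1 =>
        ∏ i, ((y : EuclideanSpace ℝ (Fin D)) i) ^ (c i))
      ((volume : Measure (EuclideanSpace ℝ (Fin D))).toSphere) := by
  have hmeas : Measurable (fun y : sphere (0 : EuclideanSpace ℝ (Fin D)) 1 =>
      ∏ i, ((y : EuclideanSpace ℝ (Fin D)) i) ^ (c i)) := by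
    have hc : Continuous (fun z : EuclideanSpace ℝ (Fin D) => ∏ i, (z i) ^ (c i)) := by
      fun_prop
    exact (hc.measurable).comp measurable_subtype_coe
  refine (integrable_const (1:ℝ)).mono' hmeas.aestronglyMeasurable ?_
  refine Filter.Eventually.of_forall fun y => ?_
  have hy : ‖(y : EuclideanSpace ℝ (Fin D))‖ ≤ 1 := by
    have := y.2; simp only [mem_sphere_iff_norm, sub_zero] at this
    simpa [this] using le_refl (1:ℝ)
  rw [Real.norm_eq_abs]
  exact abs_mono_le_one _ hy c

theorem ball_cubature_gives_sphere_cubature (d m n : ℕ) (hd : 0 < d) (hm : 0 < m)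
    (hn : 0 < n) (ι κ : Type) [Fintype ι] [Fintype κ]
    (lam : ι → ℝ) (x : ι → EuclideanSpace ℝ (Fin d))
    (nu : κ → ℝ) (t : κ → Metric.sphere (0 : EuclideanSpace ℝ (Fin (m + 1))) 1)
    (hlampos : ∀ α, 0 < lam α) (hnupos : ∀ β, 0 < nu β)
    (hxmem : ∀ α, x α ∈ Metric.closedBall (0 : EuclideanSpace ℝ (Fin d)) 1)
    (hballcub : ∀ p : MvPolynomial (Fin d) ℝ, p.totalDegree ≤ n →
      ∑ α, lam α * MvPolynomial.eval (fun i => x α i) p =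
        ∫ z in Metric.closedBall (0 : EuclideanSpace ℝ (Fin d)) 1,
          MvPolynomial.eval (fun i => z i) p * (1 - ‖z‖ ^ 2) ^ (((m : ℝ) - 1) / 2))
    (hsphcub : ∀ q : MvPolynomial (Fin (m + 1)) ℝ, q.totalDegree ≤ n →
      ∑ β, nu β * MvPolynomial.eval (fun i => (t β : EuclideanSpace ℝ (Fin (m + 1))) i) q =
        ∫ η : Metric.sphere (0 : EuclideanSpace ℝ (Fin (m + 1))) 1,
          MvPolynomial.eval (fun i => (η : EuclideanSpace ℝ (Fin (m + 1))) i) q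
          ∂(sphereMeasure m))
    (f : MvPolynomial (Fin (d + (m + 1))) ℝ) (hf : f.totalDegree ≤ n) :
    ∑ α, ∑ β, lam α * nu β *
      MvPolynomial.eval
        (fun i => (join (x α)
          (Real.sqrt (1 - ‖x α‖ ^ 2) • (t β : EuclideanSpace ℝ (Fin (m + 1))))) i) f =
    ∫ y : Metric.sphere (0 : EuclideanSpace ℝ (Fin (d + (m + 1)))) 1,
      MvPolynomial.eval (fun i => (y : EuclideanSpace ℝ (Fin (d + (m + 1)))) i) f
      ∂(sphereMeasure (d + m)) := by
  classical
  have hD : 0 < d + (m + 1) := by omega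
  haveI := euclid_nontrivial hd
  haveI := euclid_nontrivial hD
  -- abbreviation for coordinate sums of a multi-index
  let Ed := EuclideanSpace ℝ (Fin d)
  let Em := EuclideanSpace ℝ (Fin (m+1))
  let ED := EuclideanSpace ℝ (Fin (d+(m+1)))
  -- RHS: expand into monomials
  have hT : (∫ y : sphere (0 : ED) 1,
        MvPolynomial.eval (fun i => (y : ED) i) f ∂(sphereMeasure (d+m)))
      = ∑ e ∈ f.support, MvPolynomial.coeff e f *
          (2 * (∏ i, g1 (e i)) / Real.Gamma (((d+(m+1):ℕ) + ∑ i, e i) / 2)) := by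
    have h1 : ∀ y : sphere (0 : ED) 1, MvPolynomial.eval (fun i => (y : ED) i) f
        = ∑ e ∈ f.support, MvPolynomial.coeff e f * ∏ i, ((y : ED) i) ^ (e i) :=
      fun y => MvPolynomial.eval_eq' _ f
    have h2 : (sphereMeasure (d+m)) = (volume : Measure ED).toSphere := rfl
    rw [h2, integral_congr_ae (Filter.Eventually.of_forall h1), integral_finset_sum]
    · refine Finset.sum_congr rfl fun e he => ?_
      rw [integral_const_mul, sphere_monomial hD (fun i => e i)]
    · exact fun e he => (integrable_mono_sphere (fun i => e i)).const_mul _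
  rw [hT]
  -- LHS: expand into monomials
  have hjoin : ∀ α β, MvPolynomial.eval
      (fun i => (join (x α) (Real.sqrt (1 - ‖x α‖ ^ 2) • (t β : Em))) i) f
      = ∑ e ∈ f.support, MvPolynomial.coeff e f *
         ((∏ i, (x α i) ^ (e (Fin.castAdd (m+1) i))) *
          (Real.sqrt (1 - ‖x α‖ ^ 2) ^ (∑ j, e (Fin.natAdd d j)) *
           ∏ j, ((t β : Em) j) ^ (e (Fin.natAdd d j)))) := by
    intro α β
    rw [MvPolynomial.eval_eq']
    refine Finset.sum_congr rfl fun e he => ?_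
    congr 1
    rw [Fin.prod_univ_add]
    congr 1
    · refine Finset.prod_congr rfl fun i _ => ?_
      congr 1
      show Fin.append (x α) (Real.sqrt (1 - ‖x α‖ ^ 2) • (t β : Em))
        (Fin.castAdd (m+1) i) = x α i
      exact Fin.append_left _ _ i
    · rw [← Finset.prod_pow_eq_pow_sum, ← Finset.prod_mul_distrib]
      refine Finset.prod_congr rfl fun j _ => ?_
      have : Fin.append (x α) ((Real.sqrt (1 - ‖x α‖ ^ 2) • (t β : Em)).ofLp)
          (Fin.natAdd d j) = Real.sqrt (1 - ‖x α‖ ^ 2) * (t β : Em) j :=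
        Fin.append_right _ _ j
      show (Fin.append (x α) (Real.sqrt (1 - ‖x α‖ ^ 2) • (t β : Em)) (Fin.natAdd d j))
          ^ (e (Fin.natAdd d j)) = _
      rw [this, mul_pow]
  have hC1 : ∑ α, ∑ β, lam α * nu β *
      MvPolynomial.eval
        (fun i => (join (x α) (Real.sqrt (1 - ‖x α‖ ^ 2) • (t β : Em))) i) f
      = ∑ e ∈ f.support, MvPolynomial.coeff e f *
          ((∑ α, lam α * ((∏ i, (x α i) ^ (e (Fin.castAdd (m+1) i))) *
              Real.sqrt (1 - ‖x α‖ ^ 2) ^ (∑ j, e (Fin.natAdd d j)))) *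
           (∑ β, nu β * ∏ j, ((t β : Em) j) ^ (e (Fin.natAdd d j)))) := by
    calc ∑ α, ∑ β, lam α * nu β * MvPolynomial.eval
          (fun i => (join (x α) (Real.sqrt (1 - ‖x α‖ ^ 2) • (t β : Em))) i) f
        = ∑ α, ∑ β, ∑ e ∈ f.support, MvPolynomial.coeff e f *
            ((lam α * ((∏ i, (x α i) ^ (e (Fin.castAdd (m+1) i))) *
              Real.sqrt (1 - ‖x α‖ ^ 2) ^ (∑ j, e (Fin.natAdd d j)))) *
             (nu β * ∏ j, ((t β : Em) j) ^ (e (Fin.natAdd d j)))) := by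
          refine Finset.sum_congr rfl fun α _ => Finset.sum_congr rfl fun β _ => ?_
          rw [hjoin α β, Finset.mul_sum]
          exact Finset.sum_congr rfl fun e he => by ring
      _ = ∑ e ∈ f.support, ∑ α, ∑ β, MvPolynomial.coeff e f *
            ((lam α * ((∏ i, (x α i) ^ (e (Fin.castAdd (m+1) i))) *
              Real.sqrt (1 - ‖x α‖ ^ 2) ^ (∑ j, e (Fin.natAdd d j)))) *
             (nu β * ∏ j, ((t β : Em) j) ^ (e (Fin.natAdd d j)))) := by
          rw [show (∑ α, ∑ β, ∑ e ∈ f.support, MvPolynomial.coeff e f *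
            ((lam α * ((∏ i, (x α i) ^ (e (Fin.castAdd (m+1) i))) *
              Real.sqrt (1 - ‖x α‖ ^ 2) ^ (∑ j, e (Fin.natAdd d j)))) *
             (nu β * ∏ j, ((t β : Em) j) ^ (e (Fin.natAdd d j)))))
            = ∑ α, ∑ e ∈ f.support, ∑ β, MvPolynomial.coeff e f *
            ((lam α * ((∏ i, (x α i) ^ (e (Fin.castAdd (m+1) i))) *
              Real.sqrt (1 - ‖x α‖ ^ 2) ^ (∑ j, e (Fin.natAdd d j)))) *
             (nu β * ∏ j, ((t β : Em) j) ^ (e (Fin.natAdd d j))))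
            from Finset.sum_congr rfl fun α _ => Finset.sum_comm]
          exact Finset.sum_comm
      _ = _ := by
          refine Finset.sum_congr rfl fun e _ => ?_
          rw [Finset.sum_mul_sum, Finset.mul_sum]
          exact Finset.sum_congr rfl fun α _ => by rw [Finset.mul_sum]
  rw [hC1]
  refine Finset.sum_congr rfl fun e he => ?_
  -- per-monomial computation
  set a' : Fin d → ℕ := fun i => e (Fin.castAdd (m+1) i) with ha'
  set b' : Fin (m+1) → ℕ := fun j => e (Fin.natAdd d j) with hb'
  have hesum : ∑ i, e i ≤ n := by
    have h1 := MvPolynomial.le_totalDegree he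
    rw [Finsupp.sum_fintype _ _ (fun _ => rfl)] at h1
    omega
  have hsplit : ∑ i, e i = ∑ i, a' i + ∑ j, b' j := Fin.sum_univ_add _
  -- the sphere cubature sum
  have hSb : (∑ β, nu β * ∏ j, ((t β : Em) j) ^ (b' j))
      = 2 * (∏ j, g1 (b' j)) / Real.Gamma (((m+1:ℕ) + ∑ j, b' j) / 2) := by
    have hdegq : (MvPolynomial.monomial (Finsupp.equivFunOnFinite.symm b')
        (1:ℝ)).totalDegree ≤ n := by
      rw [MvPolynomial.totalDegree_monomial _ one_ne_zero,
        Finsupp.sum_fintype _ _ (fun _ => rfl)]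
      simp only [Finsupp.coe_equivFunOnFinite_symm]
      omega
    have hq := hsphcub _ hdegq
    have hevalq : ∀ X : Fin (m+1) → ℝ, MvPolynomial.eval X
        (MvPolynomial.monomial (Finsupp.equivFunOnFinite.symm b') (1:ℝ))
        = ∏ j, (X j) ^ (b' j) := by
      intro X
      rw [MvPolynomial.eval_monomial, one_mul, Finsupp.prod_pow]
      simp only [Finsupp.coe_equivFunOnFinite_symm]
    have h2 : (sphereMeasure m) = (volume : Measure Em).toSphere := rfl
    rw [h2] at hq
    calc ∑ β, nu β * ∏ j, ((t β : Em) j) ^ (b' j)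
        = ∑ β, nu β * MvPolynomial.eval (fun j => (t β : Em) j)
            (MvPolynomial.monomial (Finsupp.equivFunOnFinite.symm b') (1:ℝ)) := by
          exact Finset.sum_congr rfl fun β _ => by rw [hevalq]
      _ = ∫ η : sphere (0 : Em) 1, MvPolynomial.eval (fun j => (η : Em) j)
            (MvPolynomial.monomial (Finsupp.equivFunOnFinite.symm b') (1:ℝ))
            ∂((volume : Measure Em).toSphere) := hq
      _ = ∫ η : sphere (0 : Em) 1, ∏ j, ((η : Em) j) ^ (b' j)
            ∂((volume : Measure Em).toSphere) := by
          exact integral_congr_ae (Filter.Eventually.of_forall fun η => hevalq (fun j => (η : Em) j))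
      _ = _ := sphere_monomial (Nat.succ_pos m) b'
  by_cases hev : ∀ j, Even (b' j)
  · -- even case
    obtain ⟨c2, hc2⟩ := Finset.even_sum (fun j => b' j) (fun j _ => hev j)
    have hm1 : (1:ℝ) ≤ (m:ℝ) := by exact_mod_cast hm
    have hc20 : (0:ℝ) ≤ (c2:ℝ) := Nat.cast_nonneg c2
    have hβ'0 : (0:ℝ) ≤ (c2:ℝ) + ((m:ℝ)-1)/2 := by linarith
    have hsq : ∀ α, Real.sqrt (1 - ‖x α‖^2) ^ (∑ j, b' j) = (1 - ‖x α‖^2) ^ c2 := by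
      intro α
      have hmem := hxmem α
      rw [mem_closedBall, dist_zero_right] at hmem
      have h1 : (0:ℝ) ≤ 1 - ‖x α‖^2 := by nlinarith [norm_nonneg (x α)]
      rw [hc2, ← two_mul, pow_mul, Real.sq_sqrt h1]
    set S : MvPolynomial (Fin d) ℝ := ∑ i, (MvPolynomial.X i)^2 with hS
    set p : MvPolynomial (Fin d) ℝ :=
      (MvPolynomial.monomial (Finsupp.equivFunOnFinite.symm a') (1:ℝ)) * (1 - S)^c2 with hp
    have hdegS : S.totalDegree ≤ 2 := by
      refine (MvPolynomial.totalDegree_finset_sum _ _).trans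
        (Finset.sup_le fun i _ => (MvPolynomial.totalDegree_pow _ _).trans ?_)
      rw [MvPolynomial.totalDegree_X]
    have hdeg1S : (1 - S).totalDegree ≤ 2 := by
      rw [sub_eq_add_neg]
      refine (MvPolynomial.totalDegree_add _ _).trans (sup_le ?_ ?_)
      · simp [MvPolynomial.totalDegree_one]
      · rw [MvPolynomial.totalDegree_neg]; exact hdegS
    have hdegmono : (MvPolynomial.monomial (Finsupp.equivFunOnFinite.symm a')
        (1:ℝ)).totalDegree = ∑ i, a' i := by
      rw [MvPolynomial.totalDegree_monomial _ one_ne_zero,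
        Finsupp.sum_fintype _ _ (fun _ => rfl)]
      simp only [Finsupp.coe_equivFunOnFinite_symm]
    have hdegp : p.totalDegree ≤ n := by
      refine le_trans (MvPolynomial.totalDegree_mul _ _) ?_
      have h2 : ((1 - S)^c2).totalDegree ≤ c2 * 2 :=
        (MvPolynomial.totalDegree_pow _ _).trans (Nat.mul_le_mul_left c2 hdeg1S)
      have h3 := hdegmono
      omega
    have hevalS : ∀ z : Ed, MvPolynomial.eval (fun i => z i) S = ‖z‖^2 := by
      intro z
      rw [hS, _root_.map_sum, euclid_norm_sq]
      exact Finset.sum_congr rfl fun i _ => by rw [map_pow, MvPolynomial.eval_X]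
    have hevalp : ∀ z : Ed, MvPolynomial.eval (fun i => z i) p
        = (∏ i, (z i)^(a' i)) * (1 - ‖z‖^2)^c2 := by
      intro z
      rw [hp]
      simp only [map_mul, map_pow, map_sub, map_one, hevalS z,
        MvPolynomial.eval_monomial, one_mul, Finsupp.prod_pow,
        Finsupp.coe_equivFunOnFinite_symm]
    have hball := hballcub p hdegp
    have hA : (∑ α, lam α * ((∏ i, (x α i)^(a' i)) *
          Real.sqrt (1 - ‖x α‖^2)^(∑ j, b' j)))
        = ∑ α, lam α * MvPolynomial.eval (fun i => x α i) p := by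
      refine Finset.sum_congr rfl fun α _ => ?_
      rw [hevalp, hsq α]
    have hae : ∀ᵐ z : Ed ∂volume, ‖z‖ ≠ 1 := by
      have h0 : (volume : Measure Ed) (sphere (0:Ed) 1) = 0 :=
        Measure.addHaar_sphere volume 0 1
      rw [ae_iff]
      convert h0 using 2
      ext z
      simp [mem_sphere_iff_norm]
    have hRB : (∫ z in closedBall (0:Ed) 1, MvPolynomial.eval (fun i => z i) p *
          (1 - ‖z‖^2)^(((m:ℝ)-1)/2))
        = ∫ z in closedBall (0:Ed) 1, (∏ i, (z i)^(a' i)) *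
            (1 - ‖z‖^2)^((c2:ℝ)+((m:ℝ)-1)/2) := by
      refine setIntegral_congr_ae measurableSet_closedBall ?_
      filter_upwards [hae] with z hz hzmem
      rw [hevalp]
      have hzle : ‖z‖ ≤ 1 := by
        rw [mem_closedBall, dist_zero_right] at hzmem; exact hzmem
      have hz1 : ‖z‖ < 1 := lt_of_le_of_ne hzle hz
      have hpos : (0:ℝ) < 1 - ‖z‖^2 := by nlinarith [norm_nonneg z]
      rw [mul_assoc, ← Real.rpow_natCast (1 - ‖z‖^2) c2, ← Real.rpow_add hpos]
    rw [hSb, hA, hball, hRB, ball_monomial hd a' hβ'0]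
    -- Gamma arithmetic
    have hQ : (c2:ℝ) + ((m:ℝ)-1)/2 + 1 = (((m+1:ℕ):ℝ) + ((∑ j, b' j : ℕ):ℝ))/2 := by
      rw [hc2]; push_cast; ring
    have hP : ((d:ℝ) + ∑ i, a' i)/2 + (((m+1:ℕ):ℝ) + ((∑ j, b' j : ℕ):ℝ))/2
        = (((d+(m+1):ℕ):ℝ) + ((∑ i, e i : ℕ):ℝ))/2 := by
      rw [hsplit]; push_cast; ring
    have hprodD : (∏ i, g1 (e i)) = (∏ i, g1 (a' i)) * (∏ j, g1 (b' j)) :=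
      Fin.prod_univ_add (f := fun i => g1 (e i))
    rw [hQ, hP, hprodD]
    have hΓQ : Real.Gamma ((((m+1:ℕ):ℝ) + ((∑ j, b' j : ℕ):ℝ))/2) ≠ 0 :=
      (Real.Gamma_pos_of_pos (by positivity)).ne'
    have hΓP : Real.Gamma ((((d+(m+1):ℕ):ℝ) + ((∑ i, e i : ℕ):ℝ))/2) ≠ 0 :=
      (Real.Gamma_pos_of_pos (by positivity)).ne'
    field_simp
  · -- odd case
    push_neg at hev
    obtain ⟨j0, hj0⟩ := hev
    have hg0 : g1 (b' j0) = 0 := g1_odd (Nat.odd_iff.mpr (Nat.not_even_iff.mp hj0))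
    have hprodb : (∏ j, g1 (b' j)) = 0 :=
      Finset.prod_eq_zero (Finset.mem_univ j0) hg0
    have hprodD : (∏ i, g1 (e i)) = 0 := by
      rw [Fin.prod_univ_add (f := fun i => g1 (e i))]
      show (∏ i, g1 (a' i)) * (∏ j, g1 (b' j)) = 0
      rw [hprodb, mul_zero]
    rw [hSb, hprodb, hprodD]
    simp
end

section
/- Let d, m be positive integers, x ∈ B^d, and f a polynomial of degree ≤ n in d+m+1 variables. Then the function η ↦ f(x, √(1-‖x‖²)·η) integrated over S^m yields a polynomial of degree ≤ n in x; more precisely, there exists a polynomial g of degree ≤ n in d variables such that for all x ∈ B^d, ∫_{S^m} f(x, √(1-‖x‖²)η) dω_m(η) = g(x). -/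
open MeasureTheory Metric
open scoped Pointwise

lemma join_castAdd {d m : ℕ} (x : EuclideanSpace ℝ (Fin d))
    (y : EuclideanSpace ℝ (Fin (m + 1))) (i : Fin d) :
    join x y (Fin.castAdd (m + 1) i) = x i := by
  simp [join, Fin.append_left]

lemma join_natAdd {d m : ℕ} (x : EuclideanSpace ℝ (Fin d))
    (y : EuclideanSpace ℝ (Fin (m + 1))) (j : Fin (m + 1)) :
    join x y (Fin.natAdd d j) = y j := by
  simp [join, Fin.append_right]

instance sphereCompact (k : ℕ) :
    CompactSpace (Metric.sphere (0 : EuclideanSpace ℝ (Fin (k + 1))) 1) :=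
  isCompact_iff_compactSpace.mp (isCompact_sphere _ _)

lemma cont_coord (k : ℕ) (j : Fin (k + 1)) :
    Continuous (fun η : Metric.sphere (0 : EuclideanSpace ℝ (Fin (k + 1))) 1 =>
      (η : EuclideanSpace ℝ (Fin (k + 1))) j) := by
  exact (continuous_apply j).comp ((PiLp.continuous_ofLp 2 _).comp continuous_subtype_val)

instance sphereMeasureFinite (k : ℕ) : IsFiniteMeasure (sphereMeasure k) := by
  unfold sphereMeasure; infer_instance

lemma integrable_moment (k : ℕ) (b : Fin (k + 1) → ℕ) (c : ℝ) :
    Integrable (fun η : Metric.sphere (0 : EuclideanSpace ℝ (Fin (k + 1))) 1 =>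
      c * ∏ j, (η : EuclideanSpace ℝ (Fin (k + 1))) j ^ b j) (sphereMeasure k) := by
  have hcont : Continuous (fun η : Metric.sphere (0 : EuclideanSpace ℝ (Fin (k + 1))) 1 =>
      c * ∏ j, (η : EuclideanSpace ℝ (Fin (k + 1))) j ^ b j) :=
    continuous_const.mul (continuous_finset_prod _ fun j _ => (cont_coord k j).pow _)
  rw [← integrableOn_univ]
  exact hcont.continuousOn.integrableOn_compact isCompact_univ

noncomputable def sphMoment (k : ℕ) (b : Fin (k + 1) → ℕ) : ℝ :=
  ∫ η : Metric.sphere (0 : EuclideanSpace ℝ (Fin (k + 1))) 1,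
    ∏ j, (η : EuclideanSpace ℝ (Fin (k + 1))) j ^ b j ∂ sphereMeasure k

lemma sphereMeasure_map_neg (k : ℕ) :
    Measure.map (fun η => -η) (sphereMeasure k) = sphereMeasure k := by
  refine Measure.ext fun s hs => ?_
  rw [Measure.map_apply (continuous_neg.measurable) hs]
  have hs' : MeasurableSet ((fun a => -a) ⁻¹' s :
      Set (Metric.sphere (0 : EuclideanSpace ℝ (Fin (k + 1))) 1)) :=
    continuous_neg.measurable hs
  rw [sphereMeasure, Measure.toSphere_apply' _ hs', Measure.toSphere_apply' _ hs]
  congr 1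
  have himg : (Subtype.val '' ((fun a => -a) ⁻¹' s) : Set (EuclideanSpace ℝ (Fin (k + 1)))) =
      -((Subtype.val '' s)) := by
    ext v
    simp only [Set.mem_image, Set.mem_preimage, Set.mem_neg]
    constructor
    · rintro ⟨η, hη, rfl⟩
      exact ⟨-η, hη, by simp⟩
    · rintro ⟨w, hw, hwv⟩
      exact ⟨-w, by simpa using hw, by simp [hwv]⟩
  rw [himg, Set.smul_neg, Measure.measure_neg]

lemma sphMoment_odd_eq_zero {k : ℕ} (b : Fin (k + 1) → ℕ) (hodd : ¬ Even (∑ j, b j)) :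
    sphMoment k b = 0 := by
  set F : Metric.sphere (0 : EuclideanSpace ℝ (Fin (k + 1))) 1 → ℝ :=
    fun η => ∏ j, (η : EuclideanSpace ℝ (Fin (k + 1))) j ^ b j with hF
  have hmeas : ∀ η, F (-η) = -F η := by
    intro η
    have : ∀ j, ((-η : Metric.sphere (0 : EuclideanSpace ℝ (Fin (k + 1))) 1) :
        EuclideanSpace ℝ (Fin (k + 1))) j = -((η : EuclideanSpace ℝ (Fin (k + 1))) j) := by
      intro j; rfl
    have h1 : F (-η) = ∏ j, ((-1 : ℝ) ^ b j * (η : EuclideanSpace ℝ (Fin (k + 1))) j ^ b j) :=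
      Finset.prod_congr rfl fun j _ => by rw [this j, neg_pow]
    rw [h1, Finset.prod_mul_distrib, Finset.prod_pow_eq_pow_sum,
      (Nat.not_even_iff_odd.mp hodd).neg_one_pow]
    ring
  have hcont : Continuous F :=
    continuous_finset_prod _ fun j _ => (cont_coord k j).pow _
  have h1 : ∫ η, F η ∂ sphereMeasure k = ∫ η, F (-η) ∂ sphereMeasure k := by
    conv_lhs => rw [← sphereMeasure_map_neg k]
    rw [integral_map continuous_neg.measurable.aemeasurable
      hcont.aestronglyMeasurable]
  have h2 : ∫ η, F η ∂ sphereMeasure k = - ∫ η, F η ∂ sphereMeasure k := by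
    calc ∫ η, F η ∂ sphereMeasure k = ∫ η, F (-η) ∂ sphereMeasure k := h1
    _ = ∫ η, -F η ∂ sphereMeasure k := by simp only [hmeas]
    _ = - ∫ η, F η ∂ sphereMeasure k := integral_neg F
  have := h2
  rw [sphMoment]
  show (∫ η, F η ∂ sphereMeasure k) = 0
  linarith

open MvPolynomial

theorem sphere_average_is_polynomial (d m n : ℕ) (hd : 0 < d) (hm : 0 < m)
    (f : MvPolynomial (Fin (d + (m + 1))) ℝ) (hf : f.totalDegree ≤ n) :
    ∃ g : MvPolynomial (Fin d) ℝ, g.totalDegree ≤ n ∧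
      ∀ x ∈ Metric.closedBall (0 : EuclideanSpace ℝ (Fin d)) 1,
        (∫ η : Metric.sphere (0 : EuclideanSpace ℝ (Fin (m + 1))) 1,
          MvPolynomial.eval
            (fun i => (join x
              (Real.sqrt (1 - ‖x‖ ^ 2) • (η : EuclideanSpace ℝ (Fin (m + 1))))) i) f
          ∂(sphereMeasure m)) =
        MvPolynomial.eval (fun i => x i) g := by
  classical
  set S : (Fin (d + (m + 1)) →₀ ℕ) → ℕ := fun a => ∑ j, a (Fin.natAdd d j) with hS
  refine ⟨∑ a ∈ f.support,
      C (f.coeff a * sphMoment m (fun j => a (Fin.natAdd d j))) *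
      ((∏ i, X i ^ a (Fin.castAdd (m + 1) i)) *
        (1 - ∑ i : Fin d, X i ^ 2) ^ (S a / 2)), ?_, ?_⟩
  · refine le_trans (totalDegree_finset_sum _ _) (Finset.sup_le fun a ha => ?_)
    have hP : (∏ i, (X i : MvPolynomial (Fin d) ℝ) ^ a (Fin.castAdd (m + 1) i)).totalDegree
        ≤ ∑ i, a (Fin.castAdd (m + 1) i) := by
      refine le_trans (totalDegree_finset_prod _ _) (Finset.sum_le_sum fun i _ => ?_)
      refine le_trans (totalDegree_pow _ _) ?_
      simp [totalDegree_X]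
    have hQ : ((1 - ∑ i : Fin d, X i ^ 2 : MvPolynomial (Fin d) ℝ)).totalDegree ≤ 2 := by
      rw [sub_eq_add_neg]
      refine le_trans (totalDegree_add _ _) (max_le (by simp [totalDegree_one]) ?_)
      rw [totalDegree_neg]
      refine le_trans (totalDegree_finset_sum _ _) (Finset.sup_le fun i _ => ?_)
      refine le_trans (totalDegree_pow _ _) ?_
      simp [totalDegree_X]
    have hQk : (((1 - ∑ i : Fin d, X i ^ 2 : MvPolynomial (Fin d) ℝ)) ^ (S a / 2)).totalDegree
        ≤ S a := by
      exact le_trans (totalDegree_pow _ _)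
        (le_trans (Nat.mul_le_mul_left _ hQ) (Nat.div_mul_le_self _ _))
    have hsum : ∑ i, a (Fin.castAdd (m + 1) i) + S a ≤ n := by
      have h1 : (a.sum fun _ e => e) ≤ f.totalDegree := le_totalDegree ha
      have h2 : (a.sum fun _ e => e) = ∑ i, a i := Finsupp.sum_fintype _ _ fun _ => rfl
      rw [h2, Fin.sum_univ_add] at h1
      exact le_trans h1 hf
    refine le_trans (totalDegree_mul _ _) ?_
    rw [totalDegree_C, zero_add]
    exact le_trans (le_trans (totalDegree_mul _ _) (add_le_add hP hQk)) hsum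
  · intro x hx
    have hx1 : ‖x‖ ≤ 1 := by simpa using hx
    have h1x : (0 : ℝ) ≤ 1 - ‖x‖ ^ 2 := by nlinarith [norm_nonneg x]
    set t := Real.sqrt (1 - ‖x‖ ^ 2) with htdef
    have ht2 : t ^ 2 = 1 - ‖x‖ ^ 2 := Real.sq_sqrt h1x
    have hnormsq : ‖x‖ ^ 2 = ∑ i, x i ^ 2 := by
      rw [EuclideanSpace.norm_eq, Real.sq_sqrt (by positivity)]
      exact Finset.sum_congr rfl fun i _ => by rw [Real.norm_eq_abs, sq_abs]
    have hev : ∀ η : Metric.sphere (0 : EuclideanSpace ℝ (Fin (m + 1))) 1,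
        MvPolynomial.eval
            (fun i => (join x (t • (η : EuclideanSpace ℝ (Fin (m + 1))))) i) f
          = ∑ a ∈ f.support,
            (f.coeff a * ((∏ i, x i ^ a (Fin.castAdd (m + 1) i)) * t ^ S a)) *
              ∏ j, (η : EuclideanSpace ℝ (Fin (m + 1))) j ^ a (Fin.natAdd d j) := by
      intro η
      rw [eval_eq']
      refine Finset.sum_congr rfl fun a _ => ?_
      rw [Fin.prod_univ_add]
      have e1 : ∏ i, (join x (t • (η : EuclideanSpace ℝ (Fin (m + 1))))
            (Fin.castAdd (m + 1) i)) ^ a (Fin.castAdd (m + 1) i)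
          = ∏ i, x i ^ a (Fin.castAdd (m + 1) i) :=
        Finset.prod_congr rfl fun i _ => by rw [join_castAdd]
      have e2 : ∏ j, (join x (t • (η : EuclideanSpace ℝ (Fin (m + 1))))
            (Fin.natAdd d j)) ^ a (Fin.natAdd d j)
          = t ^ S a * ∏ j, (η : EuclideanSpace ℝ (Fin (m + 1))) j ^ a (Fin.natAdd d j) := by
        have e3 : ∀ j : Fin (m + 1), (join x (t • (η : EuclideanSpace ℝ (Fin (m + 1))))
            (Fin.natAdd d j)) = t * (η : EuclideanSpace ℝ (Fin (m + 1))) j := by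
          intro j; rw [join_natAdd]; rfl
        calc ∏ j, (join x (t • (η : EuclideanSpace ℝ (Fin (m + 1))))
              (Fin.natAdd d j)) ^ a (Fin.natAdd d j)
            = ∏ j, (t ^ a (Fin.natAdd d j) *
                (η : EuclideanSpace ℝ (Fin (m + 1))) j ^ a (Fin.natAdd d j)) :=
              Finset.prod_congr rfl fun j _ => by rw [e3 j, mul_pow]
          _ = _ := by rw [Finset.prod_mul_distrib, Finset.prod_pow_eq_pow_sum]
      rw [e1, e2]
      ring
    have hintegral : (∫ η : Metric.sphere (0 : EuclideanSpace ℝ (Fin (m + 1))) 1,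
          MvPolynomial.eval
            (fun i => (join x (t • (η : EuclideanSpace ℝ (Fin (m + 1))))) i) f
          ∂(sphereMeasure m))
        = ∑ a ∈ f.support,
            (f.coeff a * ((∏ i, x i ^ a (Fin.castAdd (m + 1) i)) * t ^ S a)) *
              sphMoment m (fun j => a (Fin.natAdd d j)) := by
      rw [integral_congr_ae (Filter.Eventually.of_forall hev)]
      rw [integral_finset_sum _ fun a _ => integrable_moment m _ _]
      exact Finset.sum_congr rfl fun a _ => by rw [integral_const_mul]; rfl
    rw [hintegral]
    rw [map_sum]
    refine Finset.sum_congr rfl fun a _ => ?_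
    rw [eval_mul, eval_C, eval_mul, eval_pow, map_sub, map_one, map_sum]
    simp only [eval_prod, eval_pow, eval_X, map_sum]
    have hx2 : (1 : ℝ) - ∑ i, x i ^ 2 = t ^ 2 := by rw [ht2, hnormsq]
    by_cases hpar : Even (S a)
    · obtain ⟨r, hr⟩ := hpar
      have hr2 : S a = 2 * r := by omega
      have hdiv : S a / 2 = r := by omega
      rw [hx2, hdiv, hr2, pow_mul]
      ring
    · rw [sphMoment_odd_eq_zero _ hpar]
      ring
end
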